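/- Let s ∈ Z_5 with s^2 = 29 and s ≡ 3 (mod 5), and let ᾱ = (7 − s)/10 ∈ Q_5 (so v_5(ᾱ) = −1). Then for every t ∈ Q_5 with v_5(t) = 0, the element 5·3·(t^2 + ᾱ) is a nonzero square in Q_5. -/

import Mathlib

instance : Fact (Nat.Prime 5) := ⟨by norm_num⟩

lemma norm_two_int5 : ‖(2 : ℤ_[5])‖ = 1 := by
  have h1 : ¬ ‖((2 : ℤ) : ℤ_[5])‖ < 1 := by
    rw [PadicInt.norm_int_lt_one_iff_dvd]; norm_num
  have h2 : ‖((2 : ℤ) : ℤ_[5])‖ ≤ 1 := PadicInt.norm_le_one _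
  push_cast at h1 h2
  linarith [lt_or_eq_of_le h2, not_lt.mp h1]

lemma isSquare_of_norm_sub_one_lt (u : ℤ_[5]) (h : ‖u - 1‖ < 1) : IsSquare u := by
  set F : Polynomial ℤ_[5] := Polynomial.X ^ 2 - Polynomial.C u with hF
  have hev : F.eval 1 = 1 - u := by simp [hF]
  have hder : F.derivative.eval 1 = 2 := by
    simp [hF, Polynomial.derivative_sub, Polynomial.derivative_pow]
  have hnorm : ‖F.eval 1‖ < ‖F.derivative.eval 1‖ ^ 2 := by
    rw [hev, hder, norm_two_int5]
    simpa [norm_sub_rev] using h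
  obtain ⟨z, hz, -⟩ := hensels_lemma (F := F) (a := 1) hnorm
  have hzu : z ^ 2 = u := by
    have h' : z ^ 2 - u = 0 := by simpa [hF] using hz
    exact sub_eq_zero.mp h'
  exact ⟨z, by rw [← hzu]; ring⟩

theorem fifteen_t_sq_add_alphabar_square (s : ℤ_[5]) (hs : s ^ 2 = 29)
    (hs3 : PadicInt.toZMod s = 3) (t : ℚ_[5]) (ht0 : t ≠ 0) (ht : t.valuation = 0) :
    5 * 3 * (t ^ 2 + (7 - (s : ℚ_[5])) / 10) ≠ 0 ∧
      IsSquare (5 * 3 * (t ^ 2 + (7 - (s : ℚ_[5])) / 10)) := by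
  set x : ℚ_[5] := 5 * 3 * (t ^ 2 + (7 - (s : ℚ_[5])) / 10) with hxdef
  set w : ℤ_[5] := 19 - 3 * s with hwdef
  have hw : ((w : ℚ_[5])) = 19 - 3 * (s : ℚ_[5]) := by rw [hwdef]; push_cast; norm_cast
  have h10 : (10 : ℚ_[5]) ≠ 0 := by norm_num
  have h2 : (2 : ℚ_[5]) ≠ 0 := by norm_num
  have hkey : x - 1 = 15 * t ^ 2 + (w : ℚ_[5]) / 2 := by
    rw [hxdef, hw]; field_simp; ring
  -- ‖t‖ = 1
  have hnt : ‖t‖ = 1 := by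
    rw [Padic.norm_eq_zpow_neg_valuation ht0, ht]; norm_num
  -- ‖15 t²‖ = 1/5
  have h3 : ‖(3 : ℚ_[5])‖ = 1 := by
    have h1 : ¬ ‖((3 : ℤ) : ℚ_[5])‖ < 1 := by
      rw [Padic.norm_intCast_lt_one_iff]; norm_num
    have h2' : ‖((3 : ℤ) : ℚ_[5])‖ ≤ 1 := by
      simpa using Padic.norm_int_le_one (p := 5) 3
    push_cast at h1 h2'
    linarith [lt_or_eq_of_le h2', not_lt.mp h1]
  have h15 : ‖(15 : ℚ_[5])‖ = 5⁻¹ := by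
    have : (15 : ℚ_[5]) = 5 * 3 := by norm_num
    have h5 : ‖(5 : ℚ_[5])‖ = 5⁻¹ := by simpa using Padic.norm_p (p := 5)
    rw [this, norm_mul, h3, h5, mul_one]
  have hterm1 : ‖15 * t ^ 2‖ = 5⁻¹ := by
    rw [norm_mul, norm_pow, hnt, h15]; norm_num
  -- ‖w‖ ≤ 1/5
  have hwz : PadicInt.toZMod w = 0 := by
    rw [hwdef, map_sub, map_mul, hs3]
    have : (PadicInt.toZMod (19 : ℤ_[5])) = 19 := map_natCast _ 19
    have h3' : (PadicInt.toZMod (3 : ℤ_[5])) = 3 := map_natCast _ 3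
    rw [show ((19 : ℤ_[5])) = ((19 : ℕ) : ℤ_[5]) by norm_num,
        show ((3 : ℤ_[5])) = ((3 : ℕ) : ℤ_[5]) by norm_num]
    simp only [map_natCast]
    decide
  have hwdvd : (5 : ℤ_[5]) ∣ w := by
    have : w ∈ RingHom.ker (PadicInt.toZMod (p := 5)) := hwz
    rw [PadicInt.ker_toZMod, PadicInt.maximalIdeal_eq_span_p,
        Ideal.mem_span_singleton] at this
    exact_mod_cast this
  have hwn : ‖w‖ ≤ 5⁻¹ := by
    obtain ⟨y, hy⟩ := hwdvd
    have h5 : ‖(5 : ℤ_[5])‖ = 5⁻¹ := by simpa using PadicInt.norm_p (p := 5)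
    calc ‖w‖ = ‖(5 : ℤ_[5])‖ * ‖y‖ := by rw [hy, norm_mul]
      _ ≤ ‖(5 : ℤ_[5])‖ * 1 := by gcongr; exact PadicInt.norm_le_one y
      _ = 5⁻¹ := by rw [mul_one, h5]
  have h2n : ‖(2 : ℚ_[5])‖ = 1 := by
    have := norm_two_int5
    rw [PadicInt.norm_def] at this
    exact_mod_cast this
  have hterm2 : ‖(w : ℚ_[5]) / 2‖ ≤ 5⁻¹ := by
    rw [norm_div, h2n, div_one, ← PadicInt.norm_def]
    exact hwn
  have hx1 : ‖x - 1‖ ≤ 5⁻¹ := by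
    rw [hkey]
    calc ‖15 * t ^ 2 + (w : ℚ_[5]) / 2‖
        ≤ max ‖15 * t ^ 2‖ ‖(w : ℚ_[5]) / 2‖ := Padic.nonarchimedean _ _
      _ ≤ 5⁻¹ := max_le (le_of_eq hterm1) hterm2
  have hx1lt : ‖x - 1‖ < 1 := lt_of_le_of_lt hx1 (by norm_num)
  have hxnorm : ‖x‖ = 1 := by
    have hne : ‖x - 1‖ ≠ ‖(1 : ℚ_[5])‖ := by rw [norm_one]; exact ne_of_lt hx1lt
    have hmax : ‖x - 1 + 1‖ = max ‖x - 1‖ ‖(1 : ℚ_[5])‖ := Padic.add_eq_max_of_ne hne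
    rw [sub_add_cancel, norm_one] at hmax
    rw [hmax, max_eq_right hx1lt.le]
  have hxne : x ≠ 0 := by
    intro h; rw [h, norm_zero] at hxnorm; norm_num at hxnorm
  refine ⟨hxne, ?_⟩
  -- lift to ℤ_[5]
  set u : ℤ_[5] := ⟨x, le_of_eq hxnorm⟩ with hu
  have hucoe : (u : ℚ_[5]) = x := rfl
  have hu1 : ‖u - 1‖ < 1 := by
    rw [PadicInt.norm_def]
    push_cast [hucoe]
    exact hx1lt
  obtain ⟨z, hz⟩ := isSquare_of_norm_sub_one_lt u hu1
  exact ⟨(z : ℚ_[5]), by rw [← hucoe, hz]; push_cast; ring⟩
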